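/- For every d ∈ [0,1] and every real L, if C_m(d)/m converges to L as m → ∞, then for every integer n ≥ 1, L ≤ C_n(d)/n. (That is, the capacity of the binary deletion channel is at most (1/n)·C_n(d) for every n.) -/

import Mathlib

open Finset

/-- Mutual information of a joint distribution `q` on `α × β`, where the output
marginal is supported inside the finite set `Ys`. Terms with zero joint
probability vanish since they are multiplied by `q x y = 0`. -/
noncomputable def MI {α : Type*} [Fintype α] {β : Type*} [DecidableEq β]
    (q : α → β → ℝ) (Ys : Finset β) : ℝ :=
  ∑ x : α, ∑ y ∈ Ys, q x y *
    Real.logb 2 (q x y / ((∑ y' ∈ Ys, q x y') * (∑ x' : α, q x' y)))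

/-- `p` is a probability distribution on the finite type `α`. -/
def IsDist {α : Type*} [Fintype α] (p : α → ℝ) : Prop :=
  (∀ a, 0 ≤ p a) ∧ ∑ a : α, p a = 1

/-- The subsequence of `x` obtained by keeping exactly the positions in `S`. -/
def delOutput {n : ℕ} (x : Fin n → Bool) (S : Finset (Fin n)) : List Bool :=
  (S.sort (· ≤ ·)).map x

/-- All binary strings of length at most `n`. -/
def listsUpTo (n : ℕ) : Finset (List Bool) :=
  (Finset.range (n + 1)).biUnion
    (fun k => Finset.image (fun v : Fin k → Bool => List.ofFn v) Finset.univ)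

/-- Transition probability of the binary deletion channel `W_n^d`:
each bit is deleted independently with probability `d`. -/
noncomputable def Wdel (n : ℕ) (d : ℝ) (x : Fin n → Bool) (y : List Bool) : ℝ :=
  ∑ S : Finset (Fin n),
    if delOutput x S = y then (1 - d) ^ S.card * d ^ (n - S.card) else 0

/-- `C_n(d)`: the supremum of `I(X;Y)` over input distributions on `{0,1}^n`,
where `Y` is the output of the deletion channel `W_n^d` on input `X`. -/
noncomputable def Cdel (n : ℕ) (d : ℝ) : ℝ :=
  sSup { r | ∃ p : (Fin n → Bool) → ℝ, IsDist p ∧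
    r = MI (fun x y => p x * Wdel n d x y) (listsUpTo n) }



section Aux
open Real


/-- Log-sum inequality (natural log). -/
lemma logsum_aux {ι : Type*} (s : Finset ι) (a b : ι → ℝ)
    (ha : ∀ i ∈ s, 0 ≤ a i) (hb : ∀ i ∈ s, 0 ≤ b i)
    (hab : ∀ i ∈ s, b i = 0 → a i = 0) :
    (∑ i ∈ s, a i) * Real.log ((∑ i ∈ s, a i) / (∑ i ∈ s, b i)) ≤
      ∑ i ∈ s, a i * Real.log (a i / b i) := by
  classical
  set s' := s.filter (fun i => b i ≠ 0) with hs'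
  have hbs' : ∀ i ∈ s', 0 < b i := by
    intro i hi
    rw [hs', Finset.mem_filter] at hi
    exact lt_of_le_of_ne (hb i hi.1) (Ne.symm hi.2)
  have hAeq : ∑ i ∈ s, a i = ∑ i ∈ s', a i := by
    rw [hs']
    refine (Finset.sum_filter_of_ne ?_).symm
    intro i hi hne hbi
    exact hne (hab i hi hbi)
  have hR : ∑ i ∈ s, a i * Real.log (a i / b i) = ∑ i ∈ s', a i * Real.log (a i / b i) := by
    rw [hs']
    refine (Finset.sum_filter_of_ne ?_).symm
    intro i hi hne hbi
    exact hne (by rw [hab i hi hbi]; ring)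
  rcases eq_or_lt_of_le (Finset.sum_nonneg ha : (0:ℝ) ≤ ∑ i ∈ s, a i) with hA0 | hApos
  · have hz : ∀ i ∈ s, a i = 0 := by
      intro i hi
      exact ((Finset.sum_eq_zero_iff_of_nonneg ha).1 hA0.symm) i hi
    rw [← hA0, zero_mul]
    refine Finset.sum_nonneg (fun i hi => ?_)
    rw [hz i hi]; simp
  · have hB'pos : 0 < ∑ i ∈ s', b i := by
      have hne : ∑ i ∈ s', a i ≠ 0 := by rw [← hAeq]; exact hApos.ne'
      obtain ⟨i, hi, -⟩ := Finset.exists_ne_zero_of_sum_ne_zero hne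
      exact Finset.sum_pos' (fun j hj => (hbs' j hj).le) ⟨i, hi, hbs' i hi⟩
    have hB'leB : ∑ i ∈ s', b i ≤ ∑ i ∈ s, b i := by
      rw [hs']
      exact Finset.sum_le_sum_of_subset_of_nonneg (Finset.filter_subset _ _)
        (fun i hi _ => hb i hi)
    have hBpos : (0:ℝ) < ∑ i ∈ s, b i := lt_of_lt_of_le hB'pos hB'leB
    set A := ∑ i ∈ s, a i with hAdef
    set B := ∑ i ∈ s, b i with hBdef
    set B' := ∑ i ∈ s', b i with hB'def
    have step1 : A * Real.log (A / B) ≤ A * Real.log (A / B') := by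
      refine mul_le_mul_of_nonneg_left ?_ hApos.le
      refine Real.log_le_log (by positivity) ?_
      exact div_le_div_of_nonneg_left hApos.le hB'pos hB'leB
    have jensen : (A / B') * Real.log (A / B') ≤ (1 / B') * ∑ i ∈ s', a i * Real.log (a i / b i) := by
      have hconv : ConvexOn ℝ (Set.Ici (0:ℝ)) (fun x => x * Real.log x) :=
        Real.strictConvexOn_mul_log.convexOn
      have hw : ∀ i ∈ s', 0 ≤ b i / B' := fun i hi => div_nonneg (hbs' i hi).le hB'pos.le
      have hw1 : ∑ i ∈ s', b i / B' = 1 := by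
        rw [← Finset.sum_div]; field_simp
        exact hB'def.symm
      have hmem : ∀ i ∈ s', a i / b i ∈ Set.Ici (0:ℝ) := by
        intro i hi
        have h1 := ha i (Finset.filter_subset _ _ hi)
        have h2 := (hbs' i hi)
        exact Set.mem_Ici.2 (by positivity)
      have hj := hconv.map_sum_le hw hw1 hmem
      simp only [smul_eq_mul] at hj
      have hsum : ∑ i ∈ s', (b i / B') * (a i / b i) = A / B' := by
        rw [hAeq, Finset.sum_div]
        refine Finset.sum_congr rfl (fun i hi => ?_)
        have hbi := (hbs' i hi).ne'
        field_simp
      rw [hsum] at hj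
      refine le_trans hj ?_
      rw [Finset.mul_sum]
      refine le_of_eq (Finset.sum_congr rfl (fun i hi => ?_))
      have hbi := (hbs' i hi).ne'
      field_simp
    have step2 : A * Real.log (A / B') ≤ ∑ i ∈ s', a i * Real.log (a i / b i) := by
      have h2 := mul_le_mul_of_nonneg_left jensen hB'pos.le
      calc A * Real.log (A / B') = B' * ((A / B') * Real.log (A / B')) := by
            field_simp
          _ ≤ B' * ((1 / B') * ∑ i ∈ s', a i * Real.log (a i / b i)) := h2
          _ = ∑ i ∈ s', a i * Real.log (a i / b i) := by field_simp
    rw [hR]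
    exact le_trans step1 step2

/-- Log-sum inequality, base 2. -/
lemma logsum {ι : Type*} (s : Finset ι) (a b : ι → ℝ)
    (ha : ∀ i ∈ s, 0 ≤ a i) (hb : ∀ i ∈ s, 0 ≤ b i)
    (hab : ∀ i ∈ s, b i = 0 → a i = 0) :
    (∑ i ∈ s, a i) * Real.logb 2 ((∑ i ∈ s, a i) / (∑ i ∈ s, b i)) ≤
      ∑ i ∈ s, a i * Real.logb 2 (a i / b i) := by
  have h := logsum_aux s a b ha hb hab
  have hlog2 : (0:ℝ) < Real.log 2 := Real.log_pos one_lt_two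
  simp only [Real.logb]
  calc (∑ i ∈ s, a i) * (Real.log ((∑ i ∈ s, a i) / (∑ i ∈ s, b i)) / Real.log 2)
      = ((∑ i ∈ s, a i) * Real.log ((∑ i ∈ s, a i) / (∑ i ∈ s, b i))) / Real.log 2 := by ring
    _ ≤ (∑ i ∈ s, a i * Real.log (a i / b i)) / Real.log 2 := by
        gcongr
    _ = ∑ i ∈ s, a i * (Real.log (a i / b i) / Real.log 2) := by
        rw [Finset.sum_div]
        exact Finset.sum_congr rfl (fun i _ => by ring)

lemma mem_listsUpTo {n : ℕ} {l : List Bool} : l ∈ listsUpTo n ↔ l.length ≤ n := by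
  simp only [listsUpTo, Finset.mem_biUnion, Finset.mem_range, Finset.mem_image,
    Finset.mem_univ, true_and]
  constructor
  · rintro ⟨k, hk, v, rfl⟩
    simp [List.length_ofFn]
    omega
  · intro h
    exact ⟨l.length, by omega, fun i => l.get i, by simp [List.ofFn_get]⟩

lemma delOutput_length {n : ℕ} (x : Fin n → Bool) (S : Finset (Fin n)) :
    (delOutput x S).length = S.card := by
  simp [delOutput]

lemma delOutput_mem {n : ℕ} (x : Fin n → Bool) (S : Finset (Fin n)) :
    delOutput x S ∈ listsUpTo n := by
  rw [mem_listsUpTo, delOutput_length]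
  simpa using Finset.card_le_univ S

lemma Wdel_nonneg {n : ℕ} {d : ℝ} (hd0 : 0 ≤ d) (hd1 : d ≤ 1) (x : Fin n → Bool)
    (y : List Bool) : 0 ≤ Wdel n d x y := by
  refine Finset.sum_nonneg (fun S _ => ?_)
  split
  · have h1 : (0:ℝ) ≤ 1 - d := by linarith
    positivity
  · exact le_refl 0

lemma sum_Wdel {n : ℕ} (d : ℝ) (x : Fin n → Bool) :
    ∑ y ∈ listsUpTo n, Wdel n d x y = 1 := by
  unfold Wdel
  rw [Finset.sum_comm]
  have h1 : ∀ S : Finset (Fin n),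
      (∑ y ∈ listsUpTo n, if delOutput x S = y then (1 - d) ^ S.card * d ^ (n - S.card) else 0)
        = (1 - d) ^ S.card * d ^ (n - S.card) := by
    intro S
    rw [Finset.sum_ite_eq]
    simp [delOutput_mem]
  rw [Finset.sum_congr rfl (fun S _ => h1 S)]
  have h2 := Finset.prod_add (fun _ : Fin n => (1 - d)) (fun _ => d) Finset.univ
  simp only [sub_add_cancel, Finset.prod_const_one, Finset.prod_const] at h2
  rw [Finset.powerset_univ] at h2
  refine Eq.trans (Finset.sum_congr rfl (fun S _ => ?_)) h2.symm
  congr 1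
  rw [Finset.card_univ_diff, Fintype.card_fin]

def finsetSumProd (α β : Type*) : Finset α × Finset β ≃ Finset (α ⊕ β) where
  toFun P := P.1.disjSum P.2
  invFun S := (S.toLeft, S.toRight)
  left_inv P := by simp
  right_inv S := by simp [Finset.toLeft_disjSum_toRight]

def splitEquiv (a b : ℕ) : Finset (Fin a) × Finset (Fin b) ≃ Finset (Fin (a + b)) :=
  (finsetSumProd _ _).trans finSumFinEquiv.finsetCongr

lemma sort_splitEquiv (a b : ℕ) (S1 : Finset (Fin a)) (S2 : Finset (Fin b)) :
    (splitEquiv a b (S1, S2)).sort (· ≤ ·) =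
      (S1.sort (· ≤ ·)).map (Fin.castAdd b) ++ (S2.sort (· ≤ ·)).map (Fin.natAdd a) := by
  refine (fun hp hs => List.Perm.eq_of_pairwise' (Finset.pairwise_sort _ _) hs hp) (Multiset.coe_eq_coe.mp ?_) ?_
  · rw [Finset.sort_eq]
    show (splitEquiv a b (S1, S2)).val = _
    have : (splitEquiv a b (S1, S2)).val =
        Multiset.map (fun i => finSumFinEquiv i) (S1.val.map Sum.inl + S2.val.map Sum.inr) := by
      simp [splitEquiv, finsetSumProd, Equiv.finsetCongr_apply, Finset.map_val,
        Multiset.disjSum]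
    rw [this]
    rw [Multiset.map_add, Multiset.map_map, Multiset.map_map]
    have e1 : ((fun i => finSumFinEquiv i) ∘ (Sum.inl : Fin a → Fin a ⊕ Fin b)) = Fin.castAdd b := by
      funext i; simp
    have e2 : ((fun i => finSumFinEquiv i) ∘ (Sum.inr : Fin b → Fin a ⊕ Fin b)) = Fin.natAdd a := by
      funext i; simp
    rw [e1, e2]
    have c1 : (S1.sort (· ≤ ·) : Multiset (Fin a)) = S1.val := Finset.sort_eq _ _
    have c2 : (S2.sort (· ≤ ·) : Multiset (Fin b)) = S2.val := Finset.sort_eq _ _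
    have : ((((S1.sort (· ≤ ·)).map (Fin.castAdd b) ++ (S2.sort (· ≤ ·)).map (Fin.natAdd a)) :
        List (Fin (a+b))) : Multiset (Fin (a+b))) =
        (↑((S1.sort (· ≤ ·)).map (Fin.castAdd b)) : Multiset (Fin (a+b))) +
        ↑((S2.sort (· ≤ ·)).map (Fin.natAdd a)) := by
      simp
    rw [this]
    congr 1
    · rw [← Multiset.map_coe, c1]
    · rw [← Multiset.map_coe, c2]
  · rw [List.pairwise_append]
    refine ⟨?_, ?_, ?_⟩
    · refine List.Pairwise.map _ (fun i j (h : i ≤ j) => ?_) (Finset.pairwise_sort _ _)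
      rw [Fin.le_def] at h ⊢
      simpa [Fin.coe_castAdd] using h
    · refine List.Pairwise.map _ (fun i j (h : i ≤ j) => ?_) (Finset.pairwise_sort _ _)
      rw [Fin.le_def] at h ⊢
      simpa [Fin.coe_natAdd] using h
    · intro u hu v hv
      simp only [List.mem_map] at hu hv
      obtain ⟨i, _, rfl⟩ := hu
      obtain ⟨j, _, rfl⟩ := hv
      rw [Fin.le_def]
      simp only [Fin.coe_castAdd, Fin.coe_natAdd]
      omega

lemma delOutput_splitEquiv (a b : ℕ) (x : Fin (a + b) → Bool) (S1 : Finset (Fin a))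
    (S2 : Finset (Fin b)) :
    delOutput x (splitEquiv a b (S1, S2)) =
      delOutput (x ∘ Fin.castAdd b) S1 ++ delOutput (x ∘ Fin.natAdd a) S2 := by
  unfold delOutput
  rw [sort_splitEquiv, List.map_append, List.map_map, List.map_map]

lemma card_splitEquiv (a b : ℕ) (S1 : Finset (Fin a)) (S2 : Finset (Fin b)) :
    (splitEquiv a b (S1, S2)).card = S1.card + S2.card := by
  simp [splitEquiv, finsetSumProd, Equiv.finsetCongr_apply, Finset.card_map, Finset.card_disjSum]

lemma Wdel_append (a b : ℕ) (d : ℝ) (x : Fin (a + b) → Bool) (y : List Bool) :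
    Wdel (a + b) d x y = ∑ z ∈ listsUpTo a ×ˢ listsUpTo b,
      if z.1 ++ z.2 = y then
        Wdel a d (x ∘ Fin.castAdd b) z.1 * Wdel b d (x ∘ Fin.natAdd a) z.2 else 0 := by
  classical
  set x1 := x ∘ Fin.castAdd b with hx1
  set x2 := x ∘ Fin.natAdd a with hx2
  set V1 : Finset (Fin a) → ℝ := fun S1 => (1 - d) ^ S1.card * d ^ (a - S1.card) with hV1
  set V2 : Finset (Fin b) → ℝ := fun S2 => (1 - d) ^ S2.card * d ^ (b - S2.card) with hV2
  have LHS : Wdel (a + b) d x y = ∑ P : Finset (Fin a) × Finset (Fin b),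
      if delOutput x1 P.1 ++ delOutput x2 P.2 = y then V1 P.1 * V2 P.2 else 0 := by
    unfold Wdel
    refine (Fintype.sum_equiv (splitEquiv a b) _ _ ?_).symm
    rintro ⟨S1, S2⟩
    rw [delOutput_splitEquiv, card_splitEquiv]
    by_cases h : delOutput x1 S1 ++ delOutput x2 S2 = y
    · simp only [hx1, hx2] at h ⊢
      rw [if_pos h, if_pos h]
      have hc1 : S1.card ≤ a := by simpa using Finset.card_le_univ S1
      have hc2 : S2.card ≤ b := by simpa using Finset.card_le_univ S2
      have harith : a + b - (S1.card + S2.card) = (a - S1.card) + (b - S2.card) := by omega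
      rw [pow_add, harith, pow_add, hV1, hV2]
      ring
    · simp only [hx1, hx2] at h ⊢
      rw [if_neg h, if_neg h]
  rw [LHS]
  have step : ∀ P : Finset (Fin a) × Finset (Fin b),
      (if delOutput x1 P.1 ++ delOutput x2 P.2 = y then V1 P.1 * V2 P.2 else 0) =
      ∑ z ∈ listsUpTo a ×ˢ listsUpTo b,
        if (delOutput x1 P.1, delOutput x2 P.2) = z then
          (if z.1 ++ z.2 = y then V1 P.1 * V2 P.2 else 0) else 0 := by
    rintro ⟨S1, S2⟩
    rw [Finset.sum_ite_eq]
    rw [if_pos (Finset.mem_product.mpr ⟨delOutput_mem x1 S1, delOutput_mem x2 S2⟩)]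
  rw [Finset.sum_congr rfl (fun P _ => step P)]
  rw [Finset.sum_comm]
  refine Finset.sum_congr rfl (fun z hz => ?_)
  obtain ⟨z1, z2⟩ := z
  by_cases hB : z1 ++ z2 = y
  · simp only [hB, if_true]
    have key : ∀ P : Finset (Fin a) × Finset (Fin b),
        (if (delOutput x1 P.1, delOutput x2 P.2) = (z1, z2) then V1 P.1 * V2 P.2 else 0) =
        (if delOutput x1 P.1 = z1 then V1 P.1 else 0) *
        (if delOutput x2 P.2 = z2 then V2 P.2 else 0) := by
      rintro ⟨S1, S2⟩
      simp only [Prod.mk.injEq]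
      by_cases h1 : delOutput x1 S1 = z1 <;> by_cases h2 : delOutput x2 S2 = z2 <;>
        simp [h1, h2]
    rw [Finset.sum_congr rfl (fun P _ => key P), Fintype.sum_prod_type]
    have : ∀ S1 : Finset (Fin a),
        (∑ S2 : Finset (Fin b), (if delOutput x1 S1 = z1 then V1 S1 else 0) *
          (if delOutput x2 S2 = z2 then V2 S2 else 0)) =
        (if delOutput x1 S1 = z1 then V1 S1 else 0) * Wdel b d x2 z2 := by
      intro S1
      rw [← Finset.mul_sum]
      rfl
    rw [Finset.sum_congr rfl (fun S1 _ => this S1), ← Finset.sum_mul]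
    rfl
  · simp only [hB, if_false]
    refine Finset.sum_eq_zero (fun P _ => ?_)
    split <;> rfl

def joinInput {a b : ℕ} (u : Fin a → Bool) (v : Fin b → Bool) : Fin (a + b) → Bool :=
  fun i => Sum.elim u v (finSumFinEquiv.symm i)

def inputEquiv (a b : ℕ) : (Fin a → Bool) × (Fin b → Bool) ≃ (Fin (a + b) → Bool) :=
  (Equiv.sumArrowEquivProdArrow _ _ _).symm.trans
    (Equiv.arrowCongr finSumFinEquiv (Equiv.refl Bool))

lemma inputEquiv_apply {a b : ℕ} (u : Fin a → Bool) (v : Fin b → Bool) :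
    inputEquiv a b (u, v) = joinInput u v := rfl

lemma joinInput_castAdd {a b : ℕ} (u : Fin a → Bool) (v : Fin b → Bool) :
    joinInput u v ∘ Fin.castAdd b = u := by
  funext i
  simp [joinInput, Function.comp]

lemma joinInput_natAdd {a b : ℕ} (u : Fin a → Bool) (v : Fin b → Bool) :
    joinInput u v ∘ Fin.natAdd a = v := by
  funext i
  simp [joinInput, Function.comp]

lemma sum_join {a b : ℕ} (f : (Fin (a + b) → Bool) → ℝ) :
    ∑ x : Fin (a + b) → Bool, f x = ∑ u : Fin a → Bool, ∑ v : Fin b → Bool, f (joinInput u v) := by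
  have h := Fintype.sum_equiv (inputEquiv a b) (fun P => f (inputEquiv a b P)) f (fun _ => rfl)
  rw [← h, Fintype.sum_prod_type]
  rfl

noncomputable def marg1 {a b : ℕ} (p : (Fin (a + b) → Bool) → ℝ) : (Fin a → Bool) → ℝ :=
  fun u => ∑ v : Fin b → Bool, p (joinInput u v)

noncomputable def marg2 {a b : ℕ} (p : (Fin (a + b) → Bool) → ℝ) : (Fin b → Bool) → ℝ :=
  fun v => ∑ u : Fin a → Bool, p (joinInput u v)

lemma sum_marg1_mul {a b : ℕ} (p : (Fin (a + b) → Bool) → ℝ) (F : (Fin a → Bool) → ℝ) :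
    ∑ x : Fin (a + b) → Bool, p x * F (x ∘ Fin.castAdd b) =
      ∑ u : Fin a → Bool, marg1 p u * F u := by
  rw [sum_join (fun x => p x * F (x ∘ Fin.castAdd b))]
  refine Finset.sum_congr rfl (fun u _ => ?_)
  rw [marg1, Finset.sum_mul]
  refine Finset.sum_congr rfl (fun v _ => ?_)
  rw [joinInput_castAdd]

lemma sum_marg2_mul {a b : ℕ} (p : (Fin (a + b) → Bool) → ℝ) (F : (Fin b → Bool) → ℝ) :
    ∑ x : Fin (a + b) → Bool, p x * F (x ∘ Fin.natAdd a) =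
      ∑ v : Fin b → Bool, marg2 p v * F v := by
  rw [sum_join (fun x => p x * F (x ∘ Fin.natAdd a)), Finset.sum_comm]
  refine Finset.sum_congr rfl (fun v _ => ?_)
  rw [marg2, Finset.sum_mul]
  refine Finset.sum_congr rfl (fun u _ => ?_)
  rw [joinInput_natAdd]

lemma IsDist.marg1 {a b : ℕ} {p : (Fin (a + b) → Bool) → ℝ} (hp : IsDist p) :
    IsDist (marg1 p) := by
  constructor
  · intro u
    exact Finset.sum_nonneg (fun v _ => hp.1 _)
  · have := sum_marg1_mul p (fun _ => 1)
    simpa [hp.2] using this.symm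

lemma IsDist.marg2 {a b : ℕ} {p : (Fin (a + b) → Bool) → ℝ} (hp : IsDist p) :
    IsDist (marg2 p) := by
  constructor
  · intro v
    exact Finset.sum_nonneg (fun u _ => hp.1 _)
  · have := sum_marg2_mul p (fun _ => 1)
    simpa [hp.2] using this.symm

lemma neg_logb_bound {z : ℝ} (hz : 0 ≤ z) : z * Real.logb 2 z⁻¹ ≤ 2 := by
  rcases eq_or_lt_of_le hz with rfl | hz'
  · simp
  · have hlog2 : (0.6931471803:ℝ) < Real.log 2 := Real.log_two_gt_d9
    have h1 : Real.log z⁻¹ ≤ z⁻¹ - 1 := Real.log_le_sub_one_of_pos (by positivity)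
    have h2 : z * Real.log z⁻¹ ≤ z * (z⁻¹ - 1) := by
      exact mul_le_mul_of_nonneg_left h1 hz
    have h3 : z * (z⁻¹ - 1) = 1 - z := by field_simp
    have h4 : z * Real.log z⁻¹ ≤ 1 := by rw [h3] at h2; linarith
    rw [Real.logb, ← mul_div_assoc]
    rw [div_le_iff₀ (by linarith)]
    nlinarith

lemma MI_le_bound {α : Type*} [Fintype α] (q : α → List Bool → ℝ) (Ys : Finset (List Bool))
    (hq : ∀ x y, 0 ≤ q x y) : MI q Ys ≤ 2 * Fintype.card α := by
  unfold MI
  have hx : ∀ x : α, (∑ y ∈ Ys, q x y *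
      Real.logb 2 (q x y / ((∑ y' ∈ Ys, q x y') * (∑ x' : α, q x' y)))) ≤ 2 := by
    intro x
    set m1 := ∑ y' ∈ Ys, q x y' with hm1
    have hm1nn : 0 ≤ m1 := Finset.sum_nonneg (fun y _ => hq x y)
    have step : ∀ y ∈ Ys, q x y * Real.logb 2 (q x y / (m1 * (∑ x' : α, q x' y))) ≤
        q x y * Real.logb 2 m1⁻¹ := by
      intro y hy
      rcases eq_or_lt_of_le (hq x y) with h0 | hpos
      · rw [← h0, zero_mul, zero_mul]
      · set mY := ∑ x' : α, q x' y with hmY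
        have hm1pos : 0 < m1 := lt_of_lt_of_le hpos (Finset.single_le_sum
          (fun y' _ => hq x y') hy)
        have hmYpos : 0 < mY := lt_of_lt_of_le hpos (Finset.single_le_sum
          (fun x' (_ : x' ∈ Finset.univ) => hq x' y) (Finset.mem_univ x))
        refine mul_le_mul_of_nonneg_left ?_ hpos.le
        have hqpos : 0 < q x y / (m1 * mY) := by positivity
        refine Real.logb_le_logb_of_le one_lt_two hqpos ?_
        rw [div_le_iff₀ (by positivity)]
        rw [inv_mul_eq_div, mul_comm m1 mY, mul_div_assoc, div_self hm1pos.ne', mul_one]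
        exact Finset.single_le_sum (fun x' (_ : x' ∈ Finset.univ) => hq x' y)
          (Finset.mem_univ x)
    calc (∑ y ∈ Ys, q x y *
        Real.logb 2 (q x y / ((∑ y' ∈ Ys, q x y') * (∑ x' : α, q x' y))))
        ≤ ∑ y ∈ Ys, q x y * Real.logb 2 m1⁻¹ := Finset.sum_le_sum step
      _ = m1 * Real.logb 2 m1⁻¹ := by rw [← Finset.sum_mul, ← hm1]
      _ ≤ 2 := neg_logb_bound hm1nn
  calc (∑ x : α, ∑ y ∈ Ys, q x y *
      Real.logb 2 (q x y / ((∑ y' ∈ Ys, q x y') * (∑ x' : α, q x' y))))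
      ≤ ∑ _x : α, (2:ℝ) := Finset.sum_le_sum (fun x _ => hx x)
    _ = 2 * Fintype.card α := by rw [Finset.sum_const, Finset.card_univ]; ring

lemma CdelSet_bddAbove (n : ℕ) {d : ℝ} (hd0 : 0 ≤ d) (hd1 : d ≤ 1) :
    BddAbove { r | ∃ p : (Fin n → Bool) → ℝ, IsDist p ∧
      r = MI (fun x y => p x * Wdel n d x y) (listsUpTo n) } := by
  refine ⟨2 * Fintype.card (Fin n → Bool), ?_⟩
  rintro r ⟨p, hp, rfl⟩
  exact MI_le_bound _ _ (fun x y => mul_nonneg (hp.1 x) (Wdel_nonneg hd0 hd1 x y))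

lemma uniform_isDist (n : ℕ) : IsDist (fun _ : Fin n → Bool => ((Fintype.card (Fin n → Bool) : ℝ))⁻¹) := by
  constructor
  · intro x; positivity
  · rw [Finset.sum_const, Finset.card_univ, nsmul_eq_mul]
    rw [mul_inv_cancel₀]
    exact_mod_cast Fintype.card_ne_zero

lemma MI_le_Cdel {n : ℕ} {d : ℝ} (hd0 : 0 ≤ d) (hd1 : d ≤ 1)
    {p : (Fin n → Bool) → ℝ} (hp : IsDist p) :
    MI (fun x y => p x * Wdel n d x y) (listsUpTo n) ≤ Cdel n d :=
  le_csSup (CdelSet_bddAbove n hd0 hd1) ⟨p, hp, rfl⟩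

lemma MI_nonneg {n : ℕ} {d : ℝ} (hd0 : 0 ≤ d) (hd1 : d ≤ 1)
    {p : (Fin n → Bool) → ℝ} (hp : IsDist p) :
    0 ≤ MI (fun x y => p x * Wdel n d x y) (listsUpTo n) := by
  classical
  set q : (Fin n → Bool) → List Bool → ℝ := fun x y => p x * Wdel n d x y with hqdef
  have hqnn : ∀ x y, 0 ≤ q x y := fun x y => mul_nonneg (hp.1 x) (Wdel_nonneg hd0 hd1 x y)
  set Ys := listsUpTo n with hYs
  have hrow : ∀ x, ∑ y ∈ Ys, q x y = p x := by
    intro x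
    rw [hqdef]
    simp only
    rw [← Finset.mul_sum, sum_Wdel, mul_one]
  have hA : ∑ z ∈ Finset.univ ×ˢ Ys, q z.1 z.2 = 1 := by
    rw [Finset.sum_product]
    rw [Finset.sum_congr rfl (fun x _ => hrow x)]
    exact hp.2
  have hcolsum : ∑ y ∈ Ys, (∑ x' : Fin n → Bool, q x' y) = 1 := by
    rw [Finset.sum_comm]
    rw [Finset.sum_congr rfl (fun x (_ : x ∈ Finset.univ) => hrow x)]
    exact hp.2
  have hB : ∑ z ∈ Finset.univ ×ˢ Ys, ((∑ y' ∈ Ys, q z.1 y') * (∑ x' : Fin n → Bool, q x' z.2)) = 1 := by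
    rw [Finset.sum_product]
    have : ∀ x : Fin n → Bool, (∑ y ∈ Ys, (∑ y' ∈ Ys, q x y') * (∑ x' : Fin n → Bool, q x' y))
        = p x := by
      intro x
      rw [← Finset.mul_sum, hrow x, hcolsum, mul_one]
    rw [Finset.sum_congr rfl (fun x _ => this x)]
    exact hp.2
  have h := logsum (Finset.univ ×ˢ Ys) (fun z => q z.1 z.2)
    (fun z => (∑ y' ∈ Ys, q z.1 y') * (∑ x' : Fin n → Bool, q x' z.2))
    (fun z _ => hqnn z.1 z.2)
    (fun z _ => mul_nonneg (Finset.sum_nonneg (fun y _ => hqnn z.1 y))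
      (Finset.sum_nonneg (fun x _ => hqnn x z.2)))
    ?_
  · rw [hA, hB] at h
    simp only [one_div, div_one, Real.logb_one, mul_zero, one_mul] at h
    refine le_trans h (le_of_eq ?_)
    rw [Finset.sum_product]
    rfl
  · rintro ⟨x, y⟩ hz hzero
    have hy : y ∈ Ys := (Finset.mem_product.mp hz).2
    rcases mul_eq_zero.mp hzero with h1 | h1
    · have hle : q x y ≤ 0 :=
        h1 ▸ Finset.single_le_sum (fun y' (_ : y' ∈ Ys) => hqnn x y') hy
      exact le_antisymm hle (hqnn x y)
    · have hle : q x y ≤ 0 :=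
        h1 ▸ Finset.single_le_sum (fun x' (_ : x' ∈ Finset.univ) => hqnn x' y)
          (Finset.mem_univ x)
      exact le_antisymm hle (hqnn x y)


section Main

variable {a b : ℕ} {d : ℝ}

noncomputable def s1fun (a b : ℕ) (d : ℝ) (p : (Fin (a + b) → Bool) → ℝ) : List Bool → ℝ :=
  fun y1 => ∑ u : Fin a → Bool, marg1 p u * Wdel a d u y1

noncomputable def s2fun (a b : ℕ) (d : ℝ) (p : (Fin (a + b) → Bool) → ℝ) : List Bool → ℝ :=
  fun y2 => ∑ v : Fin b → Bool, marg2 p v * Wdel b d v y2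

noncomputable def tfun (a b : ℕ) (d : ℝ) (p : (Fin (a + b) → Bool) → ℝ) : List Bool → ℝ :=
  fun y => ∑ z ∈ listsUpTo a ×ˢ listsUpTo b,
    if z.1 ++ z.2 = y then s1fun a b d p z.1 * s2fun a b d p z.2 else 0

lemma s1fun_eq (p : (Fin (a + b) → Bool) → ℝ) (y1 : List Bool) :
    s1fun a b d p y1 = ∑ x : Fin (a + b) → Bool, p x * Wdel a d (x ∘ Fin.castAdd b) y1 :=
  (sum_marg1_mul p (fun u => Wdel a d u y1)).symm

lemma s2fun_eq (p : (Fin (a + b) → Bool) → ℝ) (y2 : List Bool) :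
    s2fun a b d p y2 = ∑ x : Fin (a + b) → Bool, p x * Wdel b d (x ∘ Fin.natAdd a) y2 :=
  (sum_marg2_mul p (fun v => Wdel b d v y2)).symm

lemma append_mem_listsUpTo {y1 y2 : List Bool} (h1 : y1 ∈ listsUpTo a) (h2 : y2 ∈ listsUpTo b) :
    y1 ++ y2 ∈ listsUpTo (a + b) := by
  rw [mem_listsUpTo] at h1 h2 ⊢
  rw [List.length_append]
  omega

variable (hd0 : 0 ≤ d) (hd1 : d ≤ 1) {p : (Fin (a + b) → Bool) → ℝ} (hp : IsDist p)

include hd0 hd1 hp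

lemma s1fun_nonneg (y1 : List Bool) : 0 ≤ s1fun a b d p y1 :=
  Finset.sum_nonneg (fun u _ => mul_nonneg (hp.marg1.1 u) (Wdel_nonneg hd0 hd1 u y1))

lemma s2fun_nonneg (y2 : List Bool) : 0 ≤ s2fun a b d p y2 :=
  Finset.sum_nonneg (fun v _ => mul_nonneg (hp.marg2.1 v) (Wdel_nonneg hd0 hd1 v y2))

lemma le_s1fun (x : Fin (a + b) → Bool) (y1 : List Bool) :
    p x * Wdel a d (x ∘ Fin.castAdd b) y1 ≤ s1fun a b d p y1 := by
  rw [s1fun_eq]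
  exact Finset.single_le_sum (f := fun x' => p x' * Wdel a d (x' ∘ Fin.castAdd b) y1)
    (fun x' (_ : x' ∈ Finset.univ) => mul_nonneg (hp.1 x') (Wdel_nonneg hd0 hd1 _ y1))
    (Finset.mem_univ x)

lemma le_s2fun (x : Fin (a + b) → Bool) (y2 : List Bool) :
    p x * Wdel b d (x ∘ Fin.natAdd a) y2 ≤ s2fun a b d p y2 := by
  rw [s2fun_eq]
  exact Finset.single_le_sum (f := fun x' => p x' * Wdel b d (x' ∘ Fin.natAdd a) y2)
    (fun x' (_ : x' ∈ Finset.univ) => mul_nonneg (hp.1 x') (Wdel_nonneg hd0 hd1 _ y2))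
    (Finset.mem_univ x)

omit hd0 hd1 in
lemma sum_s1fun : ∑ y1 ∈ listsUpTo a, s1fun a b d p y1 = 1 := by
  unfold s1fun
  rw [Finset.sum_comm]
  have : ∀ u : Fin a → Bool, ∑ y1 ∈ listsUpTo a, marg1 p u * Wdel a d u y1 = marg1 p u := by
    intro u
    rw [← Finset.mul_sum, sum_Wdel, mul_one]
  rw [Finset.sum_congr rfl (fun u _ => this u)]
  exact hp.marg1.2

omit hd0 hd1 in
lemma sum_s2fun : ∑ y2 ∈ listsUpTo b, s2fun a b d p y2 = 1 := by
  unfold s2fun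
  rw [Finset.sum_comm]
  have : ∀ v : Fin b → Bool, ∑ y2 ∈ listsUpTo b, marg2 p v * Wdel b d v y2 = marg2 p v := by
    intro v
    rw [← Finset.mul_sum, sum_Wdel, mul_one]
  rw [Finset.sum_congr rfl (fun v _ => this v)]
  exact hp.marg2.2

lemma tfun_nonneg (y : List Bool) : 0 ≤ tfun a b d p y := by
  refine Finset.sum_nonneg (fun z _ => ?_)
  split
  · exact mul_nonneg (s1fun_nonneg hd0 hd1 hp z.1) (s2fun_nonneg hd0 hd1 hp z.2)
  · exact le_refl 0

omit hd0 hd1 hp in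
lemma collapse_sum (F : List Bool × List Bool → ℝ) :
    ∑ y ∈ listsUpTo (a + b), ∑ z ∈ listsUpTo a ×ˢ listsUpTo b,
        (if z.1 ++ z.2 = y then F z else 0) =
      ∑ z ∈ listsUpTo a ×ˢ listsUpTo b, F z := by
  rw [Finset.sum_comm]
  refine Finset.sum_congr rfl (fun z hz => ?_)
  rw [Finset.sum_ite_eq]
  rw [if_pos]
  obtain ⟨h1, h2⟩ := Finset.mem_product.mp hz
  exact append_mem_listsUpTo h1 h2

lemma sum_tfun : ∑ y ∈ listsUpTo (a + b), tfun a b d p y = 1 := by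
  unfold tfun
  rw [collapse_sum]
  rw [Finset.sum_product]
  have : ∀ y1 ∈ listsUpTo a, ∑ y2 ∈ listsUpTo b, s1fun a b d p y1 * s2fun a b d p y2
      = s1fun a b d p y1 := by
    intro y1 _
    rw [← Finset.mul_sum, sum_s2fun hp, mul_one]
  rw [Finset.sum_congr rfl this]
  exact sum_s1fun hp

lemma tfun_pos {x : Fin (a + b) → Bool} {y : List Bool}
    (hq : 0 < p x * Wdel (a + b) d x y) : 0 < tfun a b d p y := by
  have hpx : 0 < p x := by
    rcases eq_or_lt_of_le (hp.1 x) with h | h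
    · rw [← h, zero_mul] at hq; exact absurd hq (lt_irrefl 0)
    · exact h
  have hW : Wdel (a + b) d x y ≠ 0 := by
    intro h0
    rw [h0, mul_zero] at hq
    exact absurd hq (lt_irrefl 0)
  rw [Wdel_append] at hW
  obtain ⟨z, hz, hne⟩ := Finset.exists_ne_zero_of_sum_ne_zero hW
  have hcond : z.1 ++ z.2 = y := by
    by_contra h
    rw [if_neg h] at hne
    exact hne rfl
  rw [if_pos hcond] at hne
  have hW1 : 0 < Wdel a d (x ∘ Fin.castAdd b) z.1 := by
    rcases eq_or_lt_of_le (Wdel_nonneg hd0 hd1 (x ∘ Fin.castAdd b) z.1) with h | h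
    · rw [← h, zero_mul] at hne; exact absurd rfl hne
    · exact h
  have hW2 : 0 < Wdel b d (x ∘ Fin.natAdd a) z.2 := by
    rcases eq_or_lt_of_le (Wdel_nonneg hd0 hd1 (x ∘ Fin.natAdd a) z.2) with h | h
    · rw [← h, mul_zero] at hne; exact absurd rfl hne
    · exact h
  have hs1 : 0 < s1fun a b d p z.1 :=
    lt_of_lt_of_le (by positivity) (le_s1fun hd0 hd1 hp x z.1)
  have hs2 : 0 < s2fun a b d p z.2 :=
    lt_of_lt_of_le (by positivity) (le_s2fun hd0 hd1 hp x z.2)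
  have hterm : 0 < (if z.1 ++ z.2 = y then s1fun a b d p z.1 * s2fun a b d p z.2 else 0) := by
    rw [if_pos hcond]; positivity
  refine lt_of_lt_of_le hterm ?_
  refine Finset.single_le_sum (f := fun z =>
    if z.1 ++ z.2 = y then s1fun a b d p z.1 * s2fun a b d p z.2 else 0)
    (fun w _ => ?_) hz
  split
  · exact mul_nonneg (s1fun_nonneg hd0 hd1 hp _) (s2fun_nonneg hd0 hd1 hp _)
  · exact le_refl 0


omit hd0 hd1 hp in
lemma MI_channel (n : ℕ) (dd : ℝ) (r : (Fin n → Bool) → ℝ) (hr : ∀ u, 0 ≤ r u)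
    (hW : ∀ u y, 0 ≤ Wdel n dd u y) :
    MI (fun u y => r u * Wdel n dd u y) (listsUpTo n) =
      ∑ u : Fin n → Bool, ∑ y ∈ listsUpTo n, (r u * Wdel n dd u y) *
        Real.logb 2 (Wdel n dd u y / (∑ u' : Fin n → Bool, r u' * Wdel n dd u' y)) := by
  simp only [MI]
  refine Finset.sum_congr rfl (fun u _ => Finset.sum_congr rfl (fun y _ => ?_))
  have hrow : ∑ y' ∈ listsUpTo n, r u * Wdel n dd u y' = r u := by
    rw [← Finset.mul_sum, sum_Wdel, mul_one]
  rw [hrow]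
  rcases eq_or_lt_of_le (mul_nonneg (hr u) (hW u y)) with h0 | hq
  · rw [← h0, zero_mul, zero_mul]
  · have hru : 0 < r u := by
      rcases eq_or_lt_of_le (hr u) with h | h
      · rw [← h, zero_mul] at hq; exact absurd hq (lt_irrefl 0)
      · exact h
    congr 1
    rw [mul_div_mul_left _ _ hru.ne']

lemma MI_le_add :
    MI (fun x y => p x * Wdel (a + b) d x y) (listsUpTo (a + b)) ≤
      MI (fun u y1 => marg1 p u * Wdel a d u y1) (listsUpTo a) +
      MI (fun v y2 => marg2 p v * Wdel b d v y2) (listsUpTo b) := by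
  classical
  set Ys := listsUpTo (a + b) with hYs
  set AB := listsUpTo a ×ˢ listsUpTo b with hAB
  have hWnn : ∀ x y, 0 ≤ Wdel (a + b) d x y := fun x y => Wdel_nonneg hd0 hd1 x y
  have hW1nn : ∀ u y, 0 ≤ Wdel a d u y := fun u y => Wdel_nonneg hd0 hd1 u y
  have hW2nn : ∀ v y, 0 ≤ Wdel b d v y := fun v y => Wdel_nonneg hd0 hd1 v y
  have hqnn : ∀ x y, 0 ≤ p x * Wdel (a + b) d x y :=
    fun x y => mul_nonneg (hp.1 x) (hWnn x y)
  set mY : List Bool → ℝ := fun y => ∑ x' : Fin (a + b) → Bool, p x' * Wdel (a + b) d x' y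
    with hmY
  have hmYnn : ∀ y, 0 ≤ mY y := fun y => Finset.sum_nonneg (fun x _ => hqnn x y)
  have hrow : ∀ x, ∑ y ∈ Ys, p x * Wdel (a + b) d x y = p x := by
    intro x
    rw [← Finset.mul_sum, sum_Wdel, mul_one]
  have hmYsum : ∑ y ∈ Ys, mY y = 1 := by
    rw [hmY]
    simp only
    rw [Finset.sum_comm]
    rw [Finset.sum_congr rfl (fun x (_ : x ∈ Finset.univ) => hrow x)]
    exact hp.2
  have hqle_mY : ∀ x y, p x * Wdel (a + b) d x y ≤ mY y := by
    intro x y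
    exact Finset.single_le_sum (f := fun x' => p x' * Wdel (a + b) d x' y)
      (fun x' _ => hqnn x' y) (Finset.mem_univ x)
  -- E1 and E2
  set E1 : ℝ := ∑ x : Fin (a + b) → Bool, ∑ y ∈ Ys,
    (p x * Wdel (a + b) d x y) *
      Real.logb 2 ((p x * Wdel (a + b) d x y) / (p x * tfun a b d p y)) with hE1
  set G : (Fin (a + b) → Bool) → List Bool × List Bool → ℝ := fun x z =>
    (p x * (Wdel a d (x ∘ Fin.castAdd b) z.1 * Wdel b d (x ∘ Fin.natAdd a) z.2)) *
      Real.logb 2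
        ((p x * (Wdel a d (x ∘ Fin.castAdd b) z.1 * Wdel b d (x ∘ Fin.natAdd a) z.2)) /
          (p x * (s1fun a b d p z.1 * s2fun a b d p z.2))) with hG
  set E2 : ℝ := ∑ x : Fin (a + b) → Bool, ∑ z ∈ AB, G x z with hE2
  -- Step 1
  have step1 : MI (fun x y => p x * Wdel (a + b) d x y) Ys ≤ E1 := by
    have hMIeq : MI (fun x y => p x * Wdel (a + b) d x y) Ys =
        ∑ x : Fin (a + b) → Bool, ∑ y ∈ Ys, (p x * Wdel (a + b) d x y) *
          Real.logb 2 ((p x * Wdel (a + b) d x y) / (p x * mY y)) := by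
      simp only [MI]
      refine Finset.sum_congr rfl (fun x _ => Finset.sum_congr rfl (fun y _ => ?_))
      rw [hrow x]
    rw [hMIeq]
    have key : ∀ x, ∀ y ∈ Ys, (p x * Wdel (a + b) d x y) *
        Real.logb 2 ((p x * Wdel (a + b) d x y) / (p x * mY y)) =
        (p x * Wdel (a + b) d x y) *
          Real.logb 2 ((p x * Wdel (a + b) d x y) / (p x * tfun a b d p y)) -
        (p x * Wdel (a + b) d x y) * (Real.logb 2 (mY y) - Real.logb 2 (tfun a b d p y)) := by
      intro x y hy
      rcases eq_or_lt_of_le (hqnn x y) with h0 | hq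
      · rw [← h0]; ring
      · have hpx : 0 < p x := by
          rcases eq_or_lt_of_le (hp.1 x) with h | h
          · rw [← h, zero_mul] at hq; exact absurd hq (lt_irrefl 0)
          · exact h
        have hmYpos : 0 < mY y := lt_of_lt_of_le hq (hqle_mY x y)
        have htpos : 0 < tfun a b d p y := tfun_pos hd0 hd1 hp hq
        have e1 : (p x * Wdel (a + b) d x y) / (p x * mY y) =
            ((p x * Wdel (a + b) d x y) / (p x * tfun a b d p y)) *
              (tfun a b d p y / mY y) := by
          field_simp
        rw [e1, Real.logb_mul (by positivity) (by positivity),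
          Real.logb_div htpos.ne' hmYpos.ne']
        ring
    rw [Finset.sum_congr rfl (fun x _ => Finset.sum_congr rfl (key x))]
    have hsub : ∑ x : Fin (a + b) → Bool, ∑ y ∈ Ys,
        ((p x * Wdel (a + b) d x y) *
          Real.logb 2 ((p x * Wdel (a + b) d x y) / (p x * tfun a b d p y)) -
         (p x * Wdel (a + b) d x y) *
          (Real.logb 2 (mY y) - Real.logb 2 (tfun a b d p y))) =
        E1 - ∑ y ∈ Ys, mY y * (Real.logb 2 (mY y) - Real.logb 2 (tfun a b d p y)) := by
      have l2 : (∑ x : Fin (a + b) → Bool, ∑ y ∈ Ys,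
          (p x * Wdel (a + b) d x y) *
            (Real.logb 2 (mY y) - Real.logb 2 (tfun a b d p y))) =
          ∑ y ∈ Ys, mY y * (Real.logb 2 (mY y) - Real.logb 2 (tfun a b d p y)) := by
        rw [Finset.sum_comm]
        exact Finset.sum_congr rfl (fun y _ => (Finset.sum_mul _ _ _).symm)
      rw [hE1, ← l2, ← Finset.sum_sub_distrib]
      exact Finset.sum_congr rfl (fun x _ => Finset.sum_sub_distrib _ _)
    rw [hsub]
    have gibbs : 0 ≤ ∑ y ∈ Ys, mY y * (Real.logb 2 (mY y) - Real.logb 2 (tfun a b d p y)) := by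
      have hzero : ∀ y ∈ Ys, tfun a b d p y = 0 → mY y = 0 := by
        intro y _ ht0
        by_contra hmne
        have hex : ∃ x, p x * Wdel (a + b) d x y ≠ 0 := by
          by_contra hall
          push_neg at hall
          exact hmne (Finset.sum_eq_zero (fun x _ => hall x))
        obtain ⟨x, hx⟩ := hex
        have : 0 < p x * Wdel (a + b) d x y := lt_of_le_of_ne (hqnn x y) (Ne.symm hx)
        exact absurd ht0 (tfun_pos hd0 hd1 hp this).ne'
      have h := logsum Ys mY (tfun a b d p) (fun y _ => hmYnn y)
        (fun y _ => tfun_nonneg hd0 hd1 hp y) hzero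
      rw [hmYsum, sum_tfun hd0 hd1 hp] at h
      simp only [div_one, Real.logb_one, mul_zero, one_mul] at h
      refine le_trans h (le_of_eq (Finset.sum_congr rfl (fun y hy => ?_)))
      rcases eq_or_lt_of_le (hmYnn y) with h0 | hpos
      · rw [← h0]; ring
      · have htpos : 0 < tfun a b d p y := by
          rcases eq_or_lt_of_le (tfun_nonneg hd0 hd1 hp y) with ht0 | ht
          · exact absurd (hzero y hy ht0.symm) hpos.ne'
          · exact ht
        rw [Real.logb_div hpos.ne' htpos.ne']
    linarith
  -- Step 2
  have step2 : E1 ≤ E2 := by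
    rw [hE1, hE2]
    refine Finset.sum_le_sum (fun x _ => ?_)
    have per_y : ∀ y ∈ Ys, (p x * Wdel (a + b) d x y) *
        Real.logb 2 ((p x * Wdel (a + b) d x y) / (p x * tfun a b d p y)) ≤
        ∑ z ∈ AB, (if z.1 ++ z.2 = y then G x z else 0) := by
      intro y hy
      set af : List Bool × List Bool → ℝ := fun z => if z.1 ++ z.2 = y then
        p x * (Wdel a d (x ∘ Fin.castAdd b) z.1 * Wdel b d (x ∘ Fin.natAdd a) z.2) else 0
        with haf
      set bf : List Bool × List Bool → ℝ := fun z => if z.1 ++ z.2 = y then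
        p x * (s1fun a b d p z.1 * s2fun a b d p z.2) else 0 with hbf
      have hann : ∀ z ∈ AB, 0 ≤ af z := by
        intro z _
        rw [haf]; simp only
        split
        · exact mul_nonneg (hp.1 x) (mul_nonneg (hW1nn _ _) (hW2nn _ _))
        · exact le_refl 0
      have hbnn : ∀ z ∈ AB, 0 ≤ bf z := by
        intro z _
        rw [hbf]; simp only
        split
        · exact mul_nonneg (hp.1 x) (mul_nonneg (s1fun_nonneg hd0 hd1 hp _)
            (s2fun_nonneg hd0 hd1 hp _))
        · exact le_refl 0
      have hab : ∀ z ∈ AB, bf z = 0 → af z = 0 := by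
        intro z _ hbz
        rw [hbf] at hbz; rw [haf]
        simp only at hbz ⊢
        by_cases hc : z.1 ++ z.2 = y
        · rw [if_pos hc] at hbz
          rw [if_pos hc]
          rcases mul_eq_zero.mp hbz with hpz | hsz
          · rw [hpz, zero_mul]
          · rcases mul_eq_zero.mp hsz with hs1z | hs2z
            · have h1 : p x * Wdel a d (x ∘ Fin.castAdd b) z.1 = 0 := by
                refine le_antisymm ?_ (mul_nonneg (hp.1 x) (hW1nn _ _))
                rw [← hs1z]
                exact le_s1fun hd0 hd1 hp x z.1
              calc p x * (Wdel a d (x ∘ Fin.castAdd b) z.1 * Wdel b d (x ∘ Fin.natAdd a) z.2)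
                  = (p x * Wdel a d (x ∘ Fin.castAdd b) z.1) * Wdel b d (x ∘ Fin.natAdd a) z.2 := by ring
                _ = 0 := by rw [h1, zero_mul]
            · have h2 : p x * Wdel b d (x ∘ Fin.natAdd a) z.2 = 0 := by
                refine le_antisymm ?_ (mul_nonneg (hp.1 x) (hW2nn _ _))
                rw [← hs2z]
                exact le_s2fun hd0 hd1 hp x z.2
              calc p x * (Wdel a d (x ∘ Fin.castAdd b) z.1 * Wdel b d (x ∘ Fin.natAdd a) z.2)
                  = (p x * Wdel b d (x ∘ Fin.natAdd a) z.2) * Wdel a d (x ∘ Fin.castAdd b) z.1 := by ring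
                _ = 0 := by rw [h2, zero_mul]
        · rw [if_neg hc]
      have hsa : ∑ z ∈ AB, af z = p x * Wdel (a + b) d x y := by
        rw [Wdel_append, Finset.mul_sum, haf]
        refine Finset.sum_congr rfl (fun z _ => ?_)
        simp only
        split
        · rfl
        · rw [mul_zero]
      have hsb : ∑ z ∈ AB, bf z = p x * tfun a b d p y := by
        rw [tfun, Finset.mul_sum, hbf]
        refine Finset.sum_congr rfl (fun z _ => ?_)
        simp only
        split
        · rfl
        · rw [mul_zero]
      have h := logsum AB af bf hann hbnn hab
      rw [hsa, hsb] at h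
      refine le_trans h (le_of_eq (Finset.sum_congr rfl (fun z hz => ?_)))
      rw [haf, hbf, hG]
      simp only
      by_cases hc : z.1 ++ z.2 = y
      · rw [if_pos hc, if_pos hc, if_pos hc]
      · rw [if_neg hc, if_neg hc, if_neg hc, zero_mul]
    calc (∑ y ∈ Ys, (p x * Wdel (a + b) d x y) *
          Real.logb 2 ((p x * Wdel (a + b) d x y) / (p x * tfun a b d p y)))
        ≤ ∑ y ∈ Ys, ∑ z ∈ AB, (if z.1 ++ z.2 = y then G x z else 0) :=
          Finset.sum_le_sum per_y
      _ = ∑ z ∈ AB, G x z := collapse_sum (G x)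
  -- Step 3
  have step3 : E2 = MI (fun u y1 => marg1 p u * Wdel a d u y1) (listsUpTo a) +
      MI (fun v y2 => marg2 p v * Wdel b d v y2) (listsUpTo b) := by
    have hMI1 : MI (fun u y1 => marg1 p u * Wdel a d u y1) (listsUpTo a) =
        ∑ u : Fin a → Bool, ∑ y1 ∈ listsUpTo a, (marg1 p u * Wdel a d u y1) *
          Real.logb 2 (Wdel a d u y1 / s1fun a b d p y1) :=
      MI_channel a d (marg1 p) hp.marg1.1 hW1nn
    have hMI2 : MI (fun v y2 => marg2 p v * Wdel b d v y2) (listsUpTo b) =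
        ∑ v : Fin b → Bool, ∑ y2 ∈ listsUpTo b, (marg2 p v * Wdel b d v y2) *
          Real.logb 2 (Wdel b d v y2 / s2fun a b d p y2) :=
      MI_channel b d (marg2 p) hp.marg2.1 hW2nn
    have split_term : ∀ x, ∀ z ∈ AB, G x z =
        (p x * (Wdel a d (x ∘ Fin.castAdd b) z.1 * Wdel b d (x ∘ Fin.natAdd a) z.2)) *
          Real.logb 2 (Wdel a d (x ∘ Fin.castAdd b) z.1 / s1fun a b d p z.1) +
        (p x * (Wdel a d (x ∘ Fin.castAdd b) z.1 * Wdel b d (x ∘ Fin.natAdd a) z.2)) *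
          Real.logb 2 (Wdel b d (x ∘ Fin.natAdd a) z.2 / s2fun a b d p z.2) := by
      intro x z _
      rw [hG]
      simp only
      rcases eq_or_lt_of_le (mul_nonneg (hp.1 x) (mul_nonneg (hW1nn _ _) (hW2nn _ _)) :
          (0:ℝ) ≤ p x * (Wdel a d (x ∘ Fin.castAdd b) z.1 * Wdel b d (x ∘ Fin.natAdd a) z.2))
        with h0 | hq
      · rw [← h0]; ring
      · have hpx : 0 < p x := by
          rcases eq_or_lt_of_le (hp.1 x) with h | h
          · rw [← h, zero_mul] at hq; exact absurd hq (lt_irrefl 0)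
          · exact h
        have hW1pos : 0 < Wdel a d (x ∘ Fin.castAdd b) z.1 := by
          rcases eq_or_lt_of_le (hW1nn (x ∘ Fin.castAdd b) z.1) with h | h
          · rw [← h, zero_mul, mul_zero] at hq; exact absurd hq (lt_irrefl 0)
          · exact h
        have hW2pos : 0 < Wdel b d (x ∘ Fin.natAdd a) z.2 := by
          rcases eq_or_lt_of_le (hW2nn (x ∘ Fin.natAdd a) z.2) with h | h
          · rw [← h, mul_zero, mul_zero] at hq; exact absurd hq (lt_irrefl 0)
          · exact h
        have hs1pos : 0 < s1fun a b d p z.1 :=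
          lt_of_lt_of_le (by positivity) (le_s1fun hd0 hd1 hp x z.1)
        have hs2pos : 0 < s2fun a b d p z.2 :=
          lt_of_lt_of_le (by positivity) (le_s2fun hd0 hd1 hp x z.2)
        have e1 : (p x * (Wdel a d (x ∘ Fin.castAdd b) z.1 * Wdel b d (x ∘ Fin.natAdd a) z.2)) /
            (p x * (s1fun a b d p z.1 * s2fun a b d p z.2)) =
            (Wdel a d (x ∘ Fin.castAdd b) z.1 / s1fun a b d p z.1) *
            (Wdel b d (x ∘ Fin.natAdd a) z.2 / s2fun a b d p z.2) := by
          field_simp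
        rw [e1, Real.logb_mul (by positivity) (by positivity)]
        ring
    have E2split : E2 = (∑ x : Fin (a + b) → Bool, ∑ z ∈ AB,
        (p x * (Wdel a d (x ∘ Fin.castAdd b) z.1 * Wdel b d (x ∘ Fin.natAdd a) z.2)) *
          Real.logb 2 (Wdel a d (x ∘ Fin.castAdd b) z.1 / s1fun a b d p z.1)) +
        (∑ x : Fin (a + b) → Bool, ∑ z ∈ AB,
        (p x * (Wdel a d (x ∘ Fin.castAdd b) z.1 * Wdel b d (x ∘ Fin.natAdd a) z.2)) *
          Real.logb 2 (Wdel b d (x ∘ Fin.natAdd a) z.2 / s2fun a b d p z.2)) := by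
      rw [hE2, ← Finset.sum_add_distrib]
      refine Finset.sum_congr rfl (fun x _ => ?_)
      rw [← Finset.sum_add_distrib]
      exact Finset.sum_congr rfl (fun z hz => split_term x z hz)
    have piece1 : (∑ x : Fin (a + b) → Bool, ∑ z ∈ AB,
        (p x * (Wdel a d (x ∘ Fin.castAdd b) z.1 * Wdel b d (x ∘ Fin.natAdd a) z.2)) *
          Real.logb 2 (Wdel a d (x ∘ Fin.castAdd b) z.1 / s1fun a b d p z.1)) =
        ∑ u : Fin a → Bool, ∑ y1 ∈ listsUpTo a, (marg1 p u * Wdel a d u y1) *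
          Real.logb 2 (Wdel a d u y1 / s1fun a b d p y1) := by
      have perx : ∀ x : Fin (a + b) → Bool, (∑ z ∈ AB,
          (p x * (Wdel a d (x ∘ Fin.castAdd b) z.1 * Wdel b d (x ∘ Fin.natAdd a) z.2)) *
            Real.logb 2 (Wdel a d (x ∘ Fin.castAdd b) z.1 / s1fun a b d p z.1)) =
          ∑ y1 ∈ listsUpTo a, p x * (Wdel a d (x ∘ Fin.castAdd b) y1 *
            Real.logb 2 (Wdel a d (x ∘ Fin.castAdd b) y1 / s1fun a b d p y1)) := by
        intro x
        rw [hAB, Finset.sum_product]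
        refine Finset.sum_congr rfl (fun y1 _ => ?_)
        have : ∀ y2 ∈ listsUpTo b,
            (p x * (Wdel a d (x ∘ Fin.castAdd b) y1 * Wdel b d (x ∘ Fin.natAdd a) y2)) *
              Real.logb 2 (Wdel a d (x ∘ Fin.castAdd b) y1 / s1fun a b d p y1) =
            (p x * (Wdel a d (x ∘ Fin.castAdd b) y1 *
              Real.logb 2 (Wdel a d (x ∘ Fin.castAdd b) y1 / s1fun a b d p y1))) *
              Wdel b d (x ∘ Fin.natAdd a) y2 := by
          intro y2 _
          ring
        rw [Finset.sum_congr rfl this, ← Finset.mul_sum]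
        rw [sum_Wdel, mul_one]
      rw [Finset.sum_congr rfl (fun x _ => perx x)]
      rw [Finset.sum_comm]
      have pery : ∀ y1 ∈ listsUpTo a, (∑ x : Fin (a + b) → Bool,
          p x * (Wdel a d (x ∘ Fin.castAdd b) y1 *
            Real.logb 2 (Wdel a d (x ∘ Fin.castAdd b) y1 / s1fun a b d p y1))) =
          ∑ u : Fin a → Bool, marg1 p u * (Wdel a d u y1 *
            Real.logb 2 (Wdel a d u y1 / s1fun a b d p y1)) := by
        intro y1 _
        exact sum_marg1_mul p (fun u => Wdel a d u y1 *
          Real.logb 2 (Wdel a d u y1 / s1fun a b d p y1))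
      rw [Finset.sum_congr rfl pery, Finset.sum_comm]
      exact Finset.sum_congr rfl (fun u _ => Finset.sum_congr rfl (fun y1 _ => by ring))
    have piece2 : (∑ x : Fin (a + b) → Bool, ∑ z ∈ AB,
        (p x * (Wdel a d (x ∘ Fin.castAdd b) z.1 * Wdel b d (x ∘ Fin.natAdd a) z.2)) *
          Real.logb 2 (Wdel b d (x ∘ Fin.natAdd a) z.2 / s2fun a b d p z.2)) =
        ∑ v : Fin b → Bool, ∑ y2 ∈ listsUpTo b, (marg2 p v * Wdel b d v y2) *
          Real.logb 2 (Wdel b d v y2 / s2fun a b d p y2) := by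
      have perx : ∀ x : Fin (a + b) → Bool, (∑ z ∈ AB,
          (p x * (Wdel a d (x ∘ Fin.castAdd b) z.1 * Wdel b d (x ∘ Fin.natAdd a) z.2)) *
            Real.logb 2 (Wdel b d (x ∘ Fin.natAdd a) z.2 / s2fun a b d p z.2)) =
          ∑ y2 ∈ listsUpTo b, p x * (Wdel b d (x ∘ Fin.natAdd a) y2 *
            Real.logb 2 (Wdel b d (x ∘ Fin.natAdd a) y2 / s2fun a b d p y2)) := by
        intro x
        rw [hAB, Finset.sum_product, Finset.sum_comm]
        refine Finset.sum_congr rfl (fun y2 _ => ?_)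
        have : ∀ y1 ∈ listsUpTo a,
            (p x * (Wdel a d (x ∘ Fin.castAdd b) y1 * Wdel b d (x ∘ Fin.natAdd a) y2)) *
              Real.logb 2 (Wdel b d (x ∘ Fin.natAdd a) y2 / s2fun a b d p y2) =
            (p x * (Wdel b d (x ∘ Fin.natAdd a) y2 *
              Real.logb 2 (Wdel b d (x ∘ Fin.natAdd a) y2 / s2fun a b d p y2))) *
              Wdel a d (x ∘ Fin.castAdd b) y1 := by
          intro y1 _
          ring
        rw [Finset.sum_congr rfl this, ← Finset.mul_sum]
        rw [sum_Wdel, mul_one]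
      rw [Finset.sum_congr rfl (fun x _ => perx x)]
      rw [Finset.sum_comm]
      have pery : ∀ y2 ∈ listsUpTo b, (∑ x : Fin (a + b) → Bool,
          p x * (Wdel b d (x ∘ Fin.natAdd a) y2 *
            Real.logb 2 (Wdel b d (x ∘ Fin.natAdd a) y2 / s2fun a b d p y2))) =
          ∑ v : Fin b → Bool, marg2 p v * (Wdel b d v y2 *
            Real.logb 2 (Wdel b d v y2 / s2fun a b d p y2)) := by
        intro y2 _
        exact sum_marg2_mul p (fun v => Wdel b d v y2 *
          Real.logb 2 (Wdel b d v y2 / s2fun a b d p y2))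
      rw [Finset.sum_congr rfl pery, Finset.sum_comm]
      exact Finset.sum_congr rfl (fun v _ => Finset.sum_congr rfl (fun y2 _ => by ring))
    rw [E2split, hMI1, hMI2, piece1, piece2]
  rw [← step3]
  exact le_trans step1 step2


end Main

lemma Cdel_nonneg (n : ℕ) {dd : ℝ} (h0 : 0 ≤ dd) (h1 : dd ≤ 1) : 0 ≤ Cdel n dd :=
  le_trans (MI_nonneg h0 h1 (uniform_isDist n)) (MI_le_Cdel h0 h1 (uniform_isDist n))

lemma Cdel_subadd (a b : ℕ) {dd : ℝ} (h0 : 0 ≤ dd) (h1 : dd ≤ 1) :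
    Cdel (a + b) dd ≤ Cdel a dd + Cdel b dd := by
  refine Real.sSup_le ?_ ?_
  · rintro r ⟨p, hp, rfl⟩
    calc MI (fun x y => p x * Wdel (a + b) dd x y) (listsUpTo (a + b))
        ≤ MI (fun u y1 => marg1 p u * Wdel a dd u y1) (listsUpTo a) +
          MI (fun v y2 => marg2 p v * Wdel b dd v y2) (listsUpTo b) :=
          MI_le_add h0 h1 hp
      _ ≤ Cdel a dd + Cdel b dd :=
          add_le_add (MI_le_Cdel h0 h1 hp.marg1) (MI_le_Cdel h0 h1 hp.marg2)
  · exact add_nonneg (Cdel_nonneg a h0 h1) (Cdel_nonneg b h0 h1)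

lemma Cdel_mul (n : ℕ) {dd : ℝ} (h0 : 0 ≤ dd) (h1 : dd ≤ 1) :
    ∀ k : ℕ, 1 ≤ k → Cdel (k * n) dd ≤ k * Cdel n dd := by
  refine Nat.le_induction ?_ ?_
  · rw [one_mul]
    simp
  · intro k hk ih
    have he : (k + 1) * n = k * n + n := by ring
    rw [he]
    calc Cdel (k * n + n) dd ≤ Cdel (k * n) dd + Cdel n dd := Cdel_subadd _ _ h0 h1
      _ ≤ k * Cdel n dd + Cdel n dd := by linarith
      _ = ((k : ℝ) + 1) * Cdel n dd := by ring
      _ = ((k + 1 : ℕ) : ℝ) * Cdel n dd := by push_cast; ring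



end Aux
/-- For every `d ∈ [0,1]`, if `C_m(d)/m → L` as `m → ∞`, then for
every integer `n ≥ 1` we have `L ≤ C_n(d)/n`. -/
theorem bdc_capacity_le_Cn_div_n (d : ℝ) (hd₀ : 0 ≤ d) (hd₁ : d ≤ 1) (L : ℝ)
    (hL : Filter.Tendsto (fun m : ℕ => Cdel m d / m) Filter.atTop (nhds L))
    (n : ℕ) (hn : 1 ≤ n) :
    L ≤ Cdel n d / n := by
  have hcomp : Filter.Tendsto (fun k : ℕ => Cdel (k * n) d / ((k * n : ℕ) : ℝ))
      Filter.atTop (nhds L) := by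
    refine hL.comp ?_
    refine Filter.tendsto_atTop_atTop.mpr (fun m => ⟨m, fun k hk => ?_⟩)
    calc m ≤ k := hk
      _ ≤ k * n := Nat.le_mul_of_pos_right k (by omega)
  refine le_of_tendsto hcomp ?_
  filter_upwards [Filter.eventually_ge_atTop 1] with k hk
  have h := Cdel_mul n hd₀ hd₁ k hk
  have hn' : (0:ℝ) < n := by exact_mod_cast hn
  have hk' : (0:ℝ) < k := by exact_mod_cast hk
  push_cast
  rw [div_le_div_iff₀ (by positivity) hn']
  nlinarith [h]
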